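/- If a Richardson quadruple (λ, μ, ℓ×k) is not basic, then its basic demolition (λ̃, μ̃, ℓ̃×k̃), obtained by removing all full columns and full rows of λ ∪ rotate(μ), is basic: λ̃ ∪ rotate(μ̃) contains no full column of length ℓ̃ and no full row of length k̃. -/

import Mathlib

/-- `f` is a partition: weakly decreasing and eventually zero (0-indexed parts). -/
def IsPartition (f : ℕ → ℕ) : Prop :=
  (∀ i j, i ≤ j → f j ≤ f i) ∧ ∃ N, ∀ i, N ≤ i → f i = 0

/-- The partition `f` is contained in the `l × k` rectangle. -/
def InRect (f : ℕ → ℕ) (l k : ℕ) : Prop :=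
  IsPartition f ∧ f 0 ≤ k ∧ ∀ i, l ≤ i → f i = 0

/-- Number of nonzero parts of `f`. -/
noncomputable def numParts (f : ℕ → ℕ) : ℕ := {i | f i ≠ 0}.ncard

/-- Number of distinct nonzero part sizes of `f`. -/
noncomputable def numPartSizes (f : ℕ → ℕ) : ℕ := {n | n ≠ 0 ∧ ∃ i, f i = n}.ncard

/-- The cell `c = (i,j)` (0-indexed) lies in the skew shape `ν/λ`. -/
def InSkew (ν lam : ℕ → ℕ) (c : ℕ × ℕ) : Prop := lam c.1 ≤ c.2 ∧ c.2 < ν c.1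

/-- `c'` strictly precedes `c` in the right-to-left, top-to-bottom reading order. -/
def ReadBefore (c' c : ℕ × ℕ) : Prop := c'.1 < c.1 ∨ (c'.1 = c.1 ∧ c.2 < c'.2)

/-- `T` is a Littlewood–Richardson filling of the skew shape `ν/λ` with content `μ`:
a semistandard filling (positive entries, rows weakly increasing, columns strictly
increasing) whose entry `m+1` occurs `μ m` times, and whose right-to-left,
top-to-bottom reading word is a ballot sequence. -/
def IsLRFilling (lam mu ν : ℕ → ℕ) (T : ℕ × ℕ → ℕ) : Prop :=
  (∀ c, ¬ InSkew ν lam c → T c = 0) ∧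
  (∀ c, InSkew ν lam c → 1 ≤ T c) ∧
  (∀ i j j', InSkew ν lam (i, j) → InSkew ν lam (i, j') → j ≤ j' →
      T (i, j) ≤ T (i, j')) ∧
  (∀ i j, InSkew ν lam (i, j) → InSkew ν lam (i + 1, j) → T (i, j) < T (i + 1, j)) ∧
  (∀ m, {c | InSkew ν lam c ∧ T c = m + 1}.Finite ∧
      {c | InSkew ν lam c ∧ T c = m + 1}.ncard = mu m) ∧
  (∀ c, InSkew ν lam c → ∀ m, 1 ≤ m →
      {c' | InSkew ν lam c' ∧ (ReadBefore c' c ∨ c' = c) ∧ T c' = m + 1}.ncard ≤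
      {c' | InSkew ν lam c' ∧ (ReadBefore c' c ∨ c' = c) ∧ T c' = m}.ncard)

/-- The Littlewood–Richardson coefficient `c^ν_{λ,μ}`. -/
noncomputable def lrCoeff (lam mu ν : ℕ → ℕ) : ℕ :=
  Nat.card {T : ℕ × ℕ → ℕ // IsLRFilling lam mu ν T}

/-- Box `c = (i,j)` of the rectangle lies in `λ` placed at the top-left. -/
def InLam (lam : ℕ → ℕ) (c : ℕ × ℕ) : Prop := c.2 < lam c.1

/-- Box `c = (i,j)` of `l × k` lies in `rotate(μ)`, i.e. `μ` rotated 180° and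
placed at the bottom-right. -/
def InRot (mu : ℕ → ℕ) (l k : ℕ) (c : ℕ × ℕ) : Prop := k - mu (l - 1 - c.1) ≤ c.2

/-- The placements of `λ` (top-left) and `rotate(μ)` (bottom-right) in `l × k`
are disjoint. -/
def DisjointPlace (lam mu : ℕ → ℕ) (l k : ℕ) : Prop :=
  ∀ c : ℕ × ℕ, c.1 < l → c.2 < k → ¬ (InLam lam c ∧ InRot mu l k c)

/-- Column `j` of `l × k` is full for `λ ∪ rotate(μ)`. -/
def FullCol (lam mu : ℕ → ℕ) (l k j : ℕ) : Prop :=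
  ∀ i, i < l → (InLam lam (i, j) ∨ InRot mu l k (i, j))

/-- Row `i` of `l × k` is full for `λ ∪ rotate(μ)`. -/
def FullRow (lam mu : ℕ → ℕ) (l k i : ℕ) : Prop :=
  ∀ j, j < k → (InLam lam (i, j) ∨ InRot mu l k (i, j))

/-- `(λ, μ, l × k)` is a basic Richardson quadruple. -/
def BasicRQ (lam mu : ℕ → ℕ) (l k : ℕ) : Prop :=
  InRect lam l k ∧ InRect mu l k ∧ DisjointPlace lam mu l k ∧
  (∀ j, j < k → ¬ FullCol lam mu l k j) ∧ (∀ i, i < l → ¬ FullRow lam mu l k i)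

/-- The rectangle partition `(g^h)`. -/
def rectP (g h : ℕ) : ℕ → ℕ := fun i => if i < h then g else 0

/-- The hook partition `(b, 1^a)`. -/
def hookP (b a : ℕ) : ℕ → ℕ := fun i => if i = 0 then b else if i ≤ a then 1 else 0

noncomputable section

/-- Rows of `l × k` that survive the basic demolition (not full). -/
def rowKeep (lam mu : ℕ → ℕ) (l k : ℕ) : ℕ → Prop :=
  fun i => i < l ∧ ¬ FullRow lam mu l k i

/-- Columns of `l × k` that survive the basic demolition (not full). -/
def colKeep (lam mu : ℕ → ℕ) (l k : ℕ) : ℕ → Prop :=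
  fun j => j < k ∧ ¬ FullCol lam mu l k j

/-- Number of rows of the demolished rectangle. -/
def demL (lam mu : ℕ → ℕ) (l k : ℕ) : ℕ := {i | rowKeep lam mu l k i}.ncard

/-- Number of columns of the demolished rectangle. -/
def demK (lam mu : ℕ → ℕ) (l k : ℕ) : ℕ := {j | colKeep lam mu l k j}.ncard

/-- The partition `λ̃` of the basic demolition: in the `i'`-th surviving row, count
the surviving columns meeting `λ`. -/
def demLam (lam mu : ℕ → ℕ) (l k : ℕ) : ℕ → ℕ := fun i' =>
  if i' < demL lam mu l k then
    {j | colKeep lam mu l k j ∧ j < lam (Nat.nth (rowKeep lam mu l k) i')}.ncard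
  else 0

/-- The partition `μ̃` of the basic demolition: its `p`-th part counts, in the
surviving row corresponding to `rotate(μ̃)`'s row, the surviving columns meeting
`rotate(μ)`. -/
def demMu (lam mu : ℕ → ℕ) (l k : ℕ) : ℕ → ℕ := fun p =>
  if p < demL lam mu l k then
    {j | colKeep lam mu l k j ∧
      k - mu (l - 1 - Nat.nth (rowKeep lam mu l k) (demL lam mu l k - 1 - p)) ≤ j}.ncard
  else 0

lemma colKeep_finite (lam mu : ℕ → ℕ) (l k : ℕ) :
    {j | colKeep lam mu l k j}.Finite :=
  (Set.finite_Iio k).subset fun _ hj => hj.1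

lemma rowKeep_finite (lam mu : ℕ → ℕ) (l k : ℕ) :
    {i | rowKeep lam mu l k i}.Finite :=
  (Set.finite_Iio l).subset fun _ hi => hi.1

open Classical in
lemma ncard_lt_eq_count (p : ℕ → Prop) (m : ℕ) :
    {j | p j ∧ j < m}.ncard = Nat.count p m := by
  rw [Nat.count_eq_card_filter_range]
  have : {j | p j ∧ j < m} = ↑((Finset.range m).filter p) := by
    ext j; simp [and_comm]
  rw [this, Set.ncard_coe_finset]

open Classical in
lemma core (lam mu : ℕ → ℕ) (l k : ℕ) (i c : ℕ)
    (hi : rowKeep lam mu l k i) (hc : colKeep lam mu l k c)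
    (h1 : ¬ InLam lam (i, c)) (h2 : ¬ InRot mu l k (i, c)) :
    ∃ i0 j0, Nat.nth (rowKeep lam mu l k) i0 = i ∧ Nat.nth (colKeep lam mu l k) j0 = c ∧
      i0 < demL lam mu l k ∧ j0 < demK lam mu l k ∧
      ¬ InLam (demLam lam mu l k) (i0, j0) ∧
      ¬ InRot (demMu lam mu l k) (demL lam mu l k) (demK lam mu l k) (i0, j0) := by
  set R := rowKeep lam mu l k with hR
  set P := colKeep lam mu l k with hP
  have hfinR := rowKeep_finite lam mu l k
  have hfinP := colKeep_finite lam mu l k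
  have hLcard : demL lam mu l k = hfinR.toFinset.card := by
    rw [demL, Set.ncard_eq_toFinset_card _ hfinR]
  have hKcard : demK lam mu l k = hfinP.toFinset.card := by
    rw [demK, Set.ncard_eq_toFinset_card _ hfinP]
  set i0 := Nat.count R i with hi0
  set j0 := Nat.count P c with hj0
  have hnthR : Nat.nth R i0 = i := Nat.nth_count hi
  have hnthP : Nat.nth P j0 = c := Nat.nth_count hc
  have hiL : i0 < demL lam mu l k := by
    rw [hLcard]; exact Nat.count_lt_card hfinR hi
  have hjK : j0 < demK lam mu l k := by
    rw [hKcard]; exact Nat.count_lt_card hfinP hc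
  refine ⟨i0, j0, hnthR, hnthP, hiL, hjK, ?_, ?_⟩
  · -- not in demLam
    simp only [InLam, not_lt]
    rw [demLam, if_pos hiL, hnthR]
    have : {j | colKeep lam mu l k j ∧ j < lam i}.ncard = Nat.count P (lam i) :=
      ncard_lt_eq_count P (lam i)
    rw [this]
    have hle : lam i ≤ c := not_lt.mp h1
    exact Nat.count_monotone P hle
  · -- not in rot
    simp only [InRot, not_le]
    set q := demL lam mu l k - 1 - i0 with hq
    have hqL : q < demL lam mu l k := by omega
    have hq2 : demL lam mu l k - 1 - q = i0 := by omega
    rw [demMu, if_pos hqL, hq2, hnthR]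
    set m := k - mu (l - 1 - i) with hm
    have hcm : c < m := not_le.mp h2
    set S := {j | colKeep lam mu l k j ∧ m ≤ j} with hS
    -- count P c + 1 + S.ncard ≤ demK
    have hsplit : {j | P j} = {j | P j ∧ j < c + 1} ∪ {j | P j ∧ c + 1 ≤ j} := by
      ext j; simp only [Set.mem_setOf_eq, Set.mem_union]
      rcases Nat.lt_or_ge j (c + 1) with h | h <;> tauto
    have hdisj : Disjoint {j | P j ∧ j < c + 1} {j | P j ∧ c + 1 ≤ j} := by
      rw [Set.disjoint_left]; rintro j ⟨_, h1⟩ ⟨_, h2⟩; omega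
    have hKeq : demK lam mu l k =
        {j | P j ∧ j < c + 1}.ncard + {j | P j ∧ c + 1 ≤ j}.ncard := by
      rw [demK, ← hP, hsplit]
      exact Set.ncard_union_eq hdisj (hfinP.subset fun _ h => h.1)
        (hfinP.subset fun _ h => h.1)
    have h1c : {j | P j ∧ j < c + 1}.ncard = Nat.count P c + 1 := by
      rw [ncard_lt_eq_count P (c + 1), Nat.count_succ, if_pos hc]
    have hSsub : S.ncard ≤ {j | P j ∧ c + 1 ≤ j}.ncard := by
      apply Set.ncard_le_ncard _ (hfinP.subset fun _ h => h.1)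
      rintro j ⟨hj1, hj2⟩; exact ⟨hj1, by omega⟩
    omega

/-- The basic demolition of a non-basic Richardson quadruple is basic: it has no
full column and no full row. -/
theorem stmt6 (lam mu : ℕ → ℕ) (l k : ℕ)
    (hlam : InRect lam l k) (hmu : InRect mu l k)
    (hdisj : DisjointPlace lam mu l k)
    (hnotbasic : (∃ j, j < k ∧ FullCol lam mu l k j) ∨
                 (∃ i, i < l ∧ FullRow lam mu l k i)) :
    (∀ j, j < demK lam mu l k →
      ¬ FullCol (demLam lam mu l k) (demMu lam mu l k) (demL lam mu l k) (demK lam mu l k) j) ∧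
    (∀ i, i < demL lam mu l k →
      ¬ FullRow (demLam lam mu l k) (demMu lam mu l k) (demL lam mu l k) (demK lam mu l k) i) := by
  classical
  have hfinR := rowKeep_finite lam mu l k
  have hfinP := colKeep_finite lam mu l k
  have hLcard : demL lam mu l k = hfinR.toFinset.card := by
    rw [demL, Set.ncard_eq_toFinset_card _ hfinR]
  have hKcard : demK lam mu l k = hfinP.toFinset.card := by
    rw [demK, Set.ncard_eq_toFinset_card _ hfinP]
  constructor
  · intro j' hj' hfull
    have hjc : j' < hfinP.toFinset.card := by rwa [← hKcard]
    set c := Nat.nth (colKeep lam mu l k) j' with hcdef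
    have hc : colKeep lam mu l k c := Nat.nth_mem_of_lt_card hfinP hjc
    have hncf := hc.2
    unfold FullCol at hncf
    push_neg at hncf
    obtain ⟨i, hil, hni⟩ := hncf
    have hrk : rowKeep lam mu l k i := by
      refine ⟨hil, fun hfr => ?_⟩
      rcases hfr c hc.1 with h | h
      · exact hni.1 h
      · exact hni.2 h
    obtain ⟨i0, j0, hnth1, hnth2, hi0, hj0, hnl, hnr⟩ :=
      core lam mu l k i c hrk hc hni.1 hni.2
    have hjj : j0 = j' := by
      have h1 := Nat.count_nth_of_lt_card_finite hfinP (show j0 < _ by rwa [← hKcard])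
      have h2 := Nat.count_nth_of_lt_card_finite hfinP hjc
      rw [show Nat.nth (fun j => colKeep lam mu l k j) j0
            = Nat.nth (fun j => colKeep lam mu l k j) j' from hnth2.trans hcdef] at h1
      omega
    rw [hjj] at hnl hnr
    rcases hfull i0 hi0 with h | h
    · exact hnl h
    · exact hnr h
  · intro i' hi' hfull
    have hic : i' < hfinR.toFinset.card := by rwa [← hLcard]
    set i := Nat.nth (rowKeep lam mu l k) i' with hidef
    have hi : rowKeep lam mu l k i := Nat.nth_mem_of_lt_card hfinR hic
    have hnfr := hi.2
    unfold FullRow at hnfr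
    push_neg at hnfr
    obtain ⟨c, hck, hni⟩ := hnfr
    have hcol : colKeep lam mu l k c := by
      refine ⟨hck, fun hfc => ?_⟩
      rcases hfc i hi.1 with h | h
      · exact hni.1 h
      · exact hni.2 h
    obtain ⟨i0, j0, hnth1, hnth2, hi0, hj0, hnl, hnr⟩ :=
      core lam mu l k i c hi hcol hni.1 hni.2
    have hii : i0 = i' := by
      have h1 := Nat.count_nth_of_lt_card_finite hfinR (show i0 < _ by rwa [← hLcard])
      have h2 := Nat.count_nth_of_lt_card_finite hfinR hic
      rw [show Nat.nth (fun a => rowKeep lam mu l k a) i0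
            = Nat.nth (fun a => rowKeep lam mu l k a) i' from hnth1.trans hidef] at h1
      omega
    rw [hii] at hnl hnr
    rcases hfull j0 hj0 with h | h
    · exact hnl h
    · exact hnr h

end
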